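/- Fix vectors a, c ∈ ℂⁿ and signs δ₁, …, δₙ ∈ {+1, −1}, and let K = diag(δ₁, …, δₙ, 1) ∈ M_{n+1}(ℂ). Set V₀(λ) = −2iλ²Σ + 2λQ(a) − i Q(c) Σ − i Q(a)² Σ. Then K V₀(−λ) = V₀(λ) K holds for all λ ∈ ℂ if and only if for every index j one has: aⱼ = 0 whenever δⱼ = +1, and cⱼ = 0 whenever δⱼ = −1. In particular, for a field r(x,t), the constant diagonal boundary matrix K satisfies K V(−λ)|_{x=0} = V(λ)|_{x=0} K for all λ and t if and only if each component of r satisfies either the Dirichlet condition rⱼ(0,t) = 0 (when δⱼ = +1) or the Neumann condition ∂ₓrⱼ(0,t) = 0 (when δⱼ = −1); this includes the mixed Neumann/Dirichlet boundary conditions in which one component satisfies the Neumann condition and all others the Dirichlet condition. -/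
import Mathlib

open Complex Matrix

noncomputable section

def pdx (f : ℝ × ℝ → ℂ) : ℝ × ℝ → ℂ := fun p => deriv (fun x => f (x, p.2)) p.1

def Sig (n : ℕ) : Matrix (Fin (n+1)) (Fin (n+1)) ℂ :=
  Matrix.diagonal (fun i => if i = Fin.last n then -1 else 1)

def Qm {n : ℕ} (a : Fin n → ℂ) : Matrix (Fin (n+1)) (Fin (n+1)) ℂ :=
  Matrix.of fun i j =>
    if hi : i = Fin.last n then
      (if hj : j = Fin.last n then 0 else -(starRingEnd ℂ) (a (j.castPred hj)))
    else
      (if _ : j = Fin.last n then a (i.castPred hi) else 0)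

def V0 {n : ℕ} (a c : Fin n → ℂ) (lam : ℂ) : Matrix (Fin (n+1)) (Fin (n+1)) ℂ :=
  (-2 * Complex.I * lam ^ 2) • Sig n + (2 * lam) • Qm a
    - Complex.I • (Qm c * Sig n) - Complex.I • (Qm a * Qm a * Sig n)

def KmND {n : ℕ} (δ : Fin n → ℝ) : Matrix (Fin (n+1)) (Fin (n+1)) ℂ :=
  Matrix.diagonal (fun i => if h : i = Fin.last n then 1 else (δ (i.castPred h) : ℂ))

lemma hKS {n : ℕ} (δ : Fin n → ℝ) : KmND δ * Sig n = Sig n * KmND δ := by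
  rw [KmND, Sig, Matrix.diagonal_mul_diagonal, Matrix.diagonal_mul_diagonal]
  refine congrArg Matrix.diagonal ?_
  funext i; split_ifs <;> ring

lemma hSS (n : ℕ) : Sig n * Sig n = 1 := by
  rw [Sig, Matrix.diagonal_mul_diagonal]
  have : (fun i : Fin (n+1) => (if i = Fin.last n then (-1:ℂ) else 1) * (if i = Fin.last n then -1 else 1)) = fun _ => (1:ℂ) := by
    funext i; split_ifs <;> ring
  rw [this, Matrix.diagonal_one]

lemma anti_iff {n : ℕ} (δ : Fin n → ℝ) (hδ : ∀ j, δ j = 1 ∨ δ j = -1) (a : Fin n → ℂ) :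
    KmND δ * Qm a = -(Qm a * KmND δ) ↔ ∀ j, δ j = 1 → a j = 0 := by
  constructor
  · intro h j hj
    have := congrFun (congrFun h j.castSucc) (Fin.last n)
    simp [KmND, Qm, Matrix.diagonal_mul, Matrix.mul_diagonal,
      (Fin.castSucc_lt_last j).ne, hj] at this
    linear_combination this / 2
  · intro h
    ext i j
    rcases eq_or_ne i (Fin.last n) with hi | hi <;>
      rcases eq_or_ne j (Fin.last n) with hj | hj <;>
        simp [KmND, Qm, hi, hj, Matrix.diagonal_mul, Matrix.mul_diagonal]
    · rcases hδ (j.castPred hj) with h1 | h1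
      · simp [h _ h1]
      · simp [h1]
    · rcases hδ (i.castPred hi) with h1 | h1
      · simp [h _ h1]
      · simp [h1]

lemma comm_iff {n : ℕ} (δ : Fin n → ℝ) (hδ : ∀ j, δ j = 1 ∨ δ j = -1) (c : Fin n → ℂ) :
    KmND δ * Qm c = Qm c * KmND δ ↔ ∀ j, δ j = -1 → c j = 0 := by
  constructor
  · intro h j hj
    have := congrFun (congrFun h j.castSucc) (Fin.last n)
    simp [KmND, Qm, Matrix.diagonal_mul, Matrix.mul_diagonal,
      (Fin.castSucc_lt_last j).ne, hj] at this
    linear_combination -this / 2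
  · intro h
    ext i j
    rcases eq_or_ne i (Fin.last n) with hi | hi <;>
      rcases eq_or_ne j (Fin.last n) with hj | hj <;>
        simp [KmND, Qm, hi, hj, Matrix.diagonal_mul, Matrix.mul_diagonal]
    · rcases hδ (j.castPred hj) with h1 | h1
      · simp [h1]
      · simp [h _ h1]
    · rcases hδ (i.castPred hi) with h1 | h1
      · simp [h1]
      · simp [h _ h1]

lemma key {n : ℕ} (δ : Fin n → ℝ) (hδ : ∀ j, δ j = 1 ∨ δ j = -1) (a c : Fin n → ℂ) :
    (∀ lam : ℂ, KmND δ * V0 a c (-lam) = V0 a c lam * KmND δ)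
      ↔ ∀ j, (δ j = 1 → a j = 0) ∧ (δ j = -1 → c j = 0) := by
  set K := KmND δ with hK
  set SS := Sig n with hSg
  set Qa := Qm a with hQa'
  set Qc := Qm c with hQc'
  have hks : K * SS = SS * K := hKS δ
  have hss : SS * SS = 1 := hSS n
  constructor
  · intro H
    have h1 := H 1
    have h2 := H (-1)
    have h0 := H 0
    rw [neg_neg] at h2
    have hv : V0 a c (-1) - V0 a c 1 = (-4 : ℂ) • Qa := by
      simp only [V0, ← hSg, ← hQa', ← hQc']
      module
    have e : K * (V0 a c (-1) - V0 a c 1) = -((V0 a c (-1) - V0 a c 1) * K) := by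
      rw [mul_sub, sub_mul, h1, h2]; abel
    rw [hv, Matrix.mul_smul, Matrix.smul_mul, ← smul_neg] at e
    have hA : K * Qa = -(Qa * K) := smul_right_injective _ (by norm_num : (-4:ℂ) ≠ 0) e
    have hv0 : V0 a c 0 = (-Complex.I) • (Qc * SS + Qa * Qa * SS) := by
      simp only [V0, ← hSg, ← hQa', ← hQc']
      module
    rw [neg_zero] at h0
    rw [hv0, Matrix.mul_smul, Matrix.smul_mul] at h0
    have h0' : K * (Qc * SS + Qa * Qa * SS) = (Qc * SS + Qa * Qa * SS) * K :=
      smul_right_injective _ (by simp [Complex.I_ne_zero] : (-Complex.I : ℂ) ≠ 0) h0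
    have hQ2 : K * (Qa * Qa * SS) = (Qa * Qa * SS) * K := by
      calc K * (Qa * Qa * SS) = (K * Qa) * (Qa * SS) := by noncomm_ring
        _ = (-(Qa * K)) * (Qa * SS) := by rw [hA]
        _ = -(Qa * ((K * Qa) * SS)) := by noncomm_ring
        _ = -(Qa * ((-(Qa * K)) * SS)) := by rw [hA]
        _ = Qa * Qa * (K * SS) := by noncomm_ring
        _ = Qa * Qa * (SS * K) := by rw [hks]
        _ = (Qa * Qa * SS) * K := by noncomm_ring
    rw [mul_add, add_mul, hQ2] at h0'
    have hQcS : K * (Qc * SS) = (Qc * SS) * K := add_right_cancel h0'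
    have hC : K * Qc = Qc * K := by
      calc K * Qc = K * Qc * (SS * SS) := by rw [hss, mul_one]
        _ = (K * (Qc * SS)) * SS := by noncomm_ring
        _ = ((Qc * SS) * K) * SS := by rw [hQcS]
        _ = (Qc * SS) * (K * SS) := by noncomm_ring
        _ = (Qc * SS) * (SS * K) := by rw [hks]
        _ = Qc * (SS * SS) * K := by noncomm_ring
        _ = Qc * K := by rw [hss, mul_one]
    intro j
    exact ⟨fun h => (anti_iff δ hδ a).mp hA j h, fun h => (comm_iff δ hδ c).mp hC j h⟩
  · intro h lam
    have hA : K * Qa = -(Qa * K) := (anti_iff δ hδ a).mpr (fun j => (h j).1)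
    have hC : K * Qc = Qc * K := (comm_iff δ hδ c).mpr (fun j => (h j).2)
    have hQ2 : K * (Qa * Qa * SS) = (Qa * Qa * SS) * K := by
      calc K * (Qa * Qa * SS) = (K * Qa) * (Qa * SS) := by noncomm_ring
        _ = (-(Qa * K)) * (Qa * SS) := by rw [hA]
        _ = -(Qa * ((K * Qa) * SS)) := by noncomm_ring
        _ = -(Qa * ((-(Qa * K)) * SS)) := by rw [hA]
        _ = Qa * Qa * (K * SS) := by noncomm_ring
        _ = Qa * Qa * (SS * K) := by rw [hks]
        _ = (Qa * Qa * SS) * K := by noncomm_ring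
    have hQcS : K * (Qc * SS) = (Qc * SS) * K := by
      calc K * (Qc * SS) = (K * Qc) * SS := by noncomm_ring
        _ = (Qc * K) * SS := by rw [hC]
        _ = Qc * (K * SS) := by noncomm_ring
        _ = Qc * (SS * K) := by rw [hks]
        _ = (Qc * SS) * K := by noncomm_ring
    have hv : V0 a c (-lam) = (-2 * Complex.I * lam ^ 2) • SS + (-(2 * lam)) • Qa
        - Complex.I • (Qc * SS) - Complex.I • (Qa * Qa * SS) := by
      simp only [V0, ← hSg, ← hQa', ← hQc']
      module
    rw [hv]
    simp only [V0, ← hSg, ← hQa', ← hQc', mul_add, mul_sub, add_mul, sub_mul,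
      Matrix.mul_smul, Matrix.smul_mul]
    rw [hks, hA, hQcS, hQ2]
    module

theorem stmt6 {n : ℕ} (δ : Fin n → ℝ) (hδ : ∀ j, δ j = 1 ∨ δ j = -1)
    (a c : Fin n → ℂ) :
    ((∀ lam : ℂ, KmND δ * V0 a c (-lam) = V0 a c lam * KmND δ)
      ↔ ∀ j, (δ j = 1 → a j = 0) ∧ (δ j = -1 → c j = 0)) ∧
    ∀ r : ℝ × ℝ → Fin n → ℂ,
      ((∀ (t : ℝ) (lam : ℂ),
          KmND δ * V0 (r (0, t)) (fun ℓ => pdx (fun q => r q ℓ) (0, t)) (-lam)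
            = V0 (r (0, t)) (fun ℓ => pdx (fun q => r q ℓ) (0, t)) lam * KmND δ)
        ↔ ∀ j, (δ j = 1 → ∀ t : ℝ, r (0, t) j = 0) ∧
            (δ j = -1 → ∀ t : ℝ, pdx (fun q => r q j) (0, t) = 0)) := by
  refine ⟨key δ hδ a c, fun r => ?_⟩
  constructor
  · intro H j
    refine ⟨fun h1 t => ?_, fun h1 t => ?_⟩
    · exact ((key δ hδ _ _).mp (fun lam => H t lam) j).1 h1
    · exact ((key δ hδ _ _).mp (fun lam => H t lam) j).2 h1
  · intro H t lam
    exact (key δ hδ _ _).mpr (fun j => ⟨fun h1 => (H j).1 h1 t, fun h1 => (H j).2 h1 t⟩) lam
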